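/- Let p(x) = Σ_α c_α x^α be a homogeneous real polynomial of degree d in n variables (the sum over the finitely many exponent multi-indices α in the support of p), let D ⊆ ℝⁿ be a homogeneous domain (x ∈ D implies γx ∈ D for every real scalar γ), and suppose p_min := inf{ |p(x)| : x ∈ D̄, ‖x‖₂ = 1 } > 0, where D̄ is the closure of D. Let τ ≥ 0 and let q(x) = Σ_α c_α Δ_α x^α, where for each α in the support of p, Δ_α is a real number with |Δ_α − 1| ≤ τ. Then for every x ∈ D one has |q(x) − p(x)| ≤ ((Σ_α |c_α|) · τ / p_min) · |p(x)|. -/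

import Mathlib

open MvPolynomial

private lemma deg_aux {n d : ℕ} {p : MvPolynomial (Fin n) ℝ} (hp : p.IsHomogeneous d)
    {α : Fin n →₀ ℕ} (hα : α ∈ p.support) : (∑ i, α i) = d := by
  have h1 := hp (mem_support_iff.mp hα)
  rw [show (1 : Fin n → ℕ) = fun _ => 1 from rfl, ← Finsupp.degree_eq_weight_one] at h1
  rw [← h1, Finsupp.degree]
  exact (Finset.sum_subset (Finset.subset_univ _)
    (fun i _ h => Finsupp.notMem_support_iff.mp h)).symm

private lemma eval_smul_aux {n d : ℕ} {p : MvPolynomial (Fin n) ℝ} (hp : p.IsHomogeneous d)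
    (γ : ℝ) (x : Fin n → ℝ) : eval (γ • x) p = γ ^ d * eval x p := by
  rw [eval_eq', eval_eq', Finset.mul_sum]
  refine Finset.sum_congr rfl fun α hα => ?_
  have : ∏ i, (γ • x) i ^ α i = γ ^ d * ∏ i, x i ^ α i := by
    simp only [Pi.smul_apply, smul_eq_mul, mul_pow, Finset.prod_mul_distrib,
      Finset.prod_pow_eq_pow_sum, deg_aux hp hα]
  rw [this]; ring

theorem stmt_1 (n d : ℕ) (p : MvPolynomial (Fin n) ℝ) (hp : p.IsHomogeneous d)
    (D : Set (Fin n → ℝ)) (hD : ∀ x ∈ D, ∀ γ : ℝ, γ • x ∈ D)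
    (pmin : ℝ)
    (hpmin_def : pmin = sInf {y : ℝ | ∃ x ∈ closure D,
      (∑ i, (x i) ^ 2) = 1 ∧ y = |eval x p|})
    (hpmin : 0 < pmin)
    (τ : ℝ) (hτ : 0 ≤ τ)
    (Δ : (Fin n →₀ ℕ) → ℝ) (hΔ : ∀ α ∈ p.support, |Δ α - 1| ≤ τ)
    (q : MvPolynomial (Fin n) ℝ)
    (hq : q = ∑ α ∈ p.support, monomial α (coeff α p * Δ α)) :
    ∀ x ∈ D, |eval x q - eval x p| ≤
      ((∑ α ∈ p.support, |coeff α p|) * τ / pmin) * |eval x p| := by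
  set S : Set ℝ := {y : ℝ | ∃ x ∈ closure D, (∑ i, (x i) ^ 2) = 1 ∧ y = |eval x p|} with hS
  have hSbdd : BddBelow S := ⟨0, fun y hy => by obtain ⟨u, -, -, rfl⟩ := hy; positivity⟩
  have hple : ∀ u ∈ closure D, (∑ i, (u i) ^ 2) = 1 → pmin ≤ |eval u p| := by
    intro u hu h1
    rw [hpmin_def]
    exact csInf_le hSbdd ⟨u, hu, h1, rfl⟩
  intro x hx
  set r : ℝ := Real.sqrt (∑ i, (x i) ^ 2) with hr
  have hr0 : 0 ≤ r := Real.sqrt_nonneg _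
  have hsum0 : 0 ≤ ∑ i, (x i) ^ 2 := by positivity
  -- Claim A : pmin * r ^ d ≤ |eval x p|
  have claimA : pmin * r ^ d ≤ |eval x p| := by
    rcases eq_or_ne (∑ i, (x i) ^ 2) 0 with h0 | h0
    · have hx0 : x = 0 := by
        funext i
        have := (Finset.sum_eq_zero_iff_of_nonneg (fun i _ => by positivity)).mp h0
          i (Finset.mem_univ i)
        exact pow_eq_zero_iff (n := 2) (by norm_num) |>.mp this
      have hrz : r = 0 := by rw [hr, h0, Real.sqrt_zero]
      rcases Nat.eq_zero_or_pos d with hd | hd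
      · -- d = 0 : S must be nonempty
        have hSne : S.Nonempty := by
          by_contra hne
          rw [Set.not_nonempty_iff_eq_empty] at hne
          have h5 := hpmin
          rw [hpmin_def, hne, Real.sInf_empty] at h5
          exact lt_irrefl 0 h5
        obtain ⟨y, u, hu, h1, rfl⟩ := hSne
        have h2 := hple u hu h1
        have h3 : eval x p = eval u p := by
          rw [hx0, show (0 : Fin n → ℝ) = (0 : ℝ) • u by simp, eval_smul_aux hp, hd,
            pow_zero, one_mul]
        rw [hrz, hd, pow_zero, mul_one, h3]
        exact h2
      · rw [hrz, zero_pow (Nat.pos_iff_ne_zero.mp hd), mul_zero]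
        positivity
    · have hsum : 0 < ∑ i, (x i) ^ 2 := lt_of_le_of_ne hsum0 (Ne.symm h0)
      have hrpos : 0 < r := Real.sqrt_pos.mpr hsum
      set u : Fin n → ℝ := r⁻¹ • x with hu
      have huD : u ∈ D := hD x hx r⁻¹
      have hu1 : (∑ i, (u i) ^ 2) = 1 := by
        have : ∀ i, (u i) ^ 2 = r⁻¹ ^ 2 * (x i) ^ 2 := by
          intro i; rw [hu]; simp [mul_pow]
        rw [Finset.sum_congr rfl fun i _ => this i, ← Finset.mul_sum]
        rw [inv_pow, Real.sq_sqrt hsum0]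
        exact inv_mul_cancel₀ h0
      have h2 := hple u (subset_closure huD) hu1
      have h3 : eval x p = r ^ d * eval u p := by
        rw [show x = r • u by rw [hu, smul_smul, mul_inv_cancel₀ (ne_of_gt hrpos), one_smul],
          eval_smul_aux hp]
      rw [h3, abs_mul, abs_pow, abs_of_nonneg hr0]
      calc pmin * r ^ d = r ^ d * pmin := mul_comm _ _
        _ ≤ r ^ d * |eval u p| := by
            exact mul_le_mul_of_nonneg_left h2 (by positivity)
  -- Claim B : |eval x q - eval x p| ≤ (∑ |c|) * τ * r ^ d
  have hxr : ∀ i, |x i| ≤ r := by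
    intro i
    rw [hr, ← Real.sqrt_sq_eq_abs]
    exact Real.sqrt_le_sqrt (Finset.single_le_sum (f := fun j => x j ^ 2) (fun j _ => by positivity)
      (Finset.mem_univ i))
  have claimB : |eval x q - eval x p| ≤ (∑ α ∈ p.support, |coeff α p|) * τ * r ^ d := by
    have hqe : eval x q = ∑ α ∈ p.support, coeff α p * Δ α * ∏ i, x i ^ α i := by
      rw [hq]
      simp only [map_sum, eval_monomial]
      exact Finset.sum_congr rfl fun α _ => by rw [Finsupp.prod_pow]
    rw [hqe, eval_eq', ← Finset.sum_sub_distrib]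
    calc |∑ α ∈ p.support, (coeff α p * Δ α * ∏ i, x i ^ α i
            - coeff α p * ∏ i, x i ^ α i)|
        ≤ ∑ α ∈ p.support, |coeff α p * Δ α * ∏ i, x i ^ α i
            - coeff α p * ∏ i, x i ^ α i| := Finset.abs_sum_le_sum_abs _ _
      _ ≤ ∑ α ∈ p.support, |coeff α p| * τ * r ^ d := by
          refine Finset.sum_le_sum fun α hα => ?_
          have h1 : coeff α p * Δ α * ∏ i, x i ^ α i - coeff α p * ∏ i, x i ^ α i
              = coeff α p * (Δ α - 1) * ∏ i, x i ^ α i := by ring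
          rw [h1, abs_mul, abs_mul]
          have h2 : |∏ i, x i ^ α i| ≤ r ^ d := by
            rw [Finset.abs_prod, ← deg_aux hp hα, ← Finset.prod_pow_eq_pow_sum]
            refine Finset.prod_le_prod (fun i _ => by positivity) fun i _ => ?_
            rw [abs_pow]
            exact pow_le_pow_left₀ (abs_nonneg _) (hxr i) _
          refine mul_le_mul (mul_le_mul_of_nonneg_left (hΔ α hα) (abs_nonneg _)) h2
            (abs_nonneg _) (by positivity)
      _ = (∑ α ∈ p.support, |coeff α p|) * τ * r ^ d := by
          rw [← Finset.sum_mul, ← Finset.sum_mul]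
  -- conclude
  have hrd : r ^ d ≤ |eval x p| / pmin := by
    rw [le_div_iff₀ hpmin]
    calc r ^ d * pmin = pmin * r ^ d := mul_comm _ _
      _ ≤ |eval x p| := claimA
  calc |eval x q - eval x p| ≤ (∑ α ∈ p.support, |coeff α p|) * τ * r ^ d := claimB
    _ ≤ (∑ α ∈ p.support, |coeff α p|) * τ * (|eval x p| / pmin) := by
        refine mul_le_mul_of_nonneg_left hrd ?_
        have : 0 ≤ ∑ α ∈ p.support, |coeff α p| := Finset.sum_nonneg fun α _ => abs_nonneg _
        positivity
    _ = ((∑ α ∈ p.support, |coeff α p|) * τ / pmin) * |eval x p| := by ring
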